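/- Let γ satisfy Hypothesis (Γ). Then for every a ≥ 0, lim_{s→+∞} inf_{t∈[0,a]} ‖γ(s) − γ(t)‖/|s − t| = 1, and likewise lim_{s→−∞} inf_{t∈[−a,0]} ‖γ(s) − γ(t)‖/|s − t| = 1. -/

import Mathlib

open Filter
open scoped Topology RealInnerProductSpace

private lemma aux_tendsto (γ : ℝ → EuclideanSpace ℝ (Fin 2))
    (hlip : LipschitzWith 1 γ)
    (u : EuclideanSpace ℝ (Fin 2)) (hu : ‖u‖ = 1) (M K : ℝ)
    (hline : ∀ s : ℝ, s > M → ⟪u, γ s⟫ = s + K)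
    (a : ℝ) (ha : 0 ≤ a) :
    Tendsto (fun s : ℝ => ⨅ t : Set.Icc (0 : ℝ) a, ‖γ s - γ (t : ℝ)‖ / |s - (t : ℝ)|)
      atTop (𝓝 1) := by
  -- bound on ⟪u, γ t⟫ for t ∈ [0, a]
  obtain ⟨B, hB⟩ : ∃ B : ℝ, ∀ t ∈ Set.Icc (0:ℝ) a, ‖⟪u, γ t⟫‖ ≤ B :=
    isCompact_Icc.exists_bound_of_continuousOn
      ((continuous_const.inner hlip.continuous).continuousOn)
  have hBdd : ∀ s : ℝ, BddBelow (Set.range fun t : Set.Icc (0:ℝ) a =>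
      ‖γ s - γ (t : ℝ)‖ / |s - (t : ℝ)|) := by
    intro s
    refine ⟨0, ?_⟩
    rintro x ⟨t, rfl⟩
    exact div_nonneg (norm_nonneg _) (abs_nonneg _)
  have hL : Tendsto (fun s : ℝ => (s + (K - B)) / s) atTop (𝓝 1) := by
    have h1 : Tendsto (fun s : ℝ => 1 + (K - B) / s) atTop (𝓝 (1 + 0)) :=
      tendsto_const_nhds.add (tendsto_const_nhds.div_atTop tendsto_id)
    rw [add_zero] at h1
    refine h1.congr' ?_
    filter_upwards [eventually_gt_atTop (0:ℝ)] with s hs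
    field_simp
  refine tendsto_of_tendsto_of_tendsto_of_le_of_le' hL tendsto_const_nhds ?_ ?_
  · -- lower bound
    filter_upwards [eventually_gt_atTop (max (max M a) (max 0 (B - K)))] with s hs
    have hsM : s > M := lt_of_le_of_lt (le_max_left _ _) (lt_of_le_of_lt (le_max_left _ _) hs)
    have hsa : s > a := lt_of_le_of_lt (le_max_right _ _) (lt_of_le_of_lt (le_max_left _ _) hs)
    have hs0 : s > 0 := lt_of_le_of_lt (le_max_left _ _) (lt_of_le_of_lt (le_max_right _ _) hs)
    have hsBK : s > B - K := lt_of_le_of_lt (le_max_right _ _) (lt_of_le_of_lt (le_max_right _ _) hs)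
    haveI : Nonempty (Set.Icc (0:ℝ) a) := ⟨⟨0, le_refl _, ha⟩⟩
    refine le_ciInf fun t => ?_
    obtain ⟨t, ht0, hta⟩ := t
    simp only
    have hts : t < s := lt_of_le_of_lt hta hsa
    have habs : |s - t| = s - t := abs_of_pos (by linarith)
    have hnum : s + (K - B) ≤ ‖γ s - γ t‖ := by
      have h1 : ⟪u, γ t⟫ ≤ B := le_trans (le_abs_self _) (hB t ⟨ht0, hta⟩)
      have h2 : ⟪u, γ s - γ t⟫ = (s + K) - ⟪u, γ t⟫ := by
        rw [inner_sub_right, hline s hsM]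
      have h3 : ⟪u, γ s - γ t⟫ ≤ ‖γ s - γ t‖ := by
        have := real_inner_le_norm u (γ s - γ t)
        rwa [hu, one_mul] at this
      linarith
    rw [habs]
    have hpos : (0:ℝ) < s - t := by linarith
    calc (s + (K - B)) / s ≤ (s + (K - B)) / (s - t) := by
          apply div_le_div_of_nonneg_left (by linarith) hpos (by linarith)
      _ ≤ ‖γ s - γ t‖ / (s - t) := by
          gcongr
  · -- upper bound
    filter_upwards [eventually_gt_atTop (max 0 a)] with s hs
    have hs0 : s > 0 := lt_of_le_of_lt (le_max_left _ _) hs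
    refine ciInf_le_of_le (hBdd s) ⟨0, le_refl _, ha⟩ ?_
    simp only [sub_zero]
    rw [div_le_one (by rw [abs_of_pos hs0]; exact hs0 : (0:ℝ) < |s|)]
    have := hlip.dist_le_mul s 0
    rw [NNReal.coe_one, one_mul, Real.dist_eq, sub_zero] at this
    rwa [← dist_eq_norm]

/-- Let `γ` satisfy Hypothesis (Γ). Then for every `a ≥ 0`,
`lim_{s → +∞} inf_{t ∈ [0,a]} ‖γ s - γ t‖ / |s - t| = 1`, and likewise
`lim_{s → -∞} inf_{t ∈ [-a,0]} ‖γ s - γ t‖ / |s - t| = 1`. -/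
theorem stmt_4 (γ : ℝ → EuclideanSpace ℝ (Fin 2))
    (hsmooth : ContDiff ℝ (⊤ : ℕ∞) γ) (hinj : Function.Injective γ)
    (hunit : ∀ s : ℝ, ‖deriv γ s‖ = 1)
    (M am bm cm dm ap bp cp dp : ℝ) (hM : 0 < M)
    (hm1 : am ^ 2 + cm ^ 2 = 1) (hp1 : ap ^ 2 + cp ^ 2 = 1)
    (hne : (am, cm) ≠ (-ap, -cp))
    (hγm : ∀ s : ℝ, s < -M → γ s 0 = am * s + bm ∧ γ s 1 = cm * s + dm)
    (hγp : ∀ s : ℝ, s > M → γ s 0 = ap * s + bp ∧ γ s 1 = cp * s + dp)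
    (a : ℝ) (ha : 0 ≤ a) :
    Tendsto (fun s : ℝ => ⨅ t : Set.Icc (0 : ℝ) a, ‖γ s - γ (t : ℝ)‖ / |s - (t : ℝ)|)
      atTop (𝓝 1) ∧
    Tendsto (fun s : ℝ => ⨅ t : Set.Icc (-a) (0 : ℝ), ‖γ s - γ (t : ℝ)‖ / |s - (t : ℝ)|)
      atBot (𝓝 1) := by
  have hlip : LipschitzWith 1 γ := by
    apply lipschitzWith_of_nnnorm_deriv_le (hsmooth.differentiable (by simp))
    intro x
    rw [← NNReal.coe_le_coe, coe_nnnorm, hunit x, NNReal.coe_one]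
  -- unit vectors
  have hnorm : ∀ x y : ℝ, x ^ 2 + y ^ 2 = 1 →
      ‖((WithLp.equiv 2 (Fin 2 → ℝ)).symm ![x, y] : EuclideanSpace ℝ (Fin 2))‖ = 1 := by
    intro x y hxy
    rw [EuclideanSpace.norm_eq]
    simp only [WithLp.equiv_symm_apply, PiLp.toLp_apply, Fin.sum_univ_two, Matrix.cons_val_zero,
      Matrix.cons_val_one, Matrix.head_cons, Real.norm_eq_abs, sq_abs]
    rw [hxy, Real.sqrt_one]
  have hinner : ∀ (x y : ℝ) (v : EuclideanSpace ℝ (Fin 2)),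
      ⟪((WithLp.equiv 2 (Fin 2 → ℝ)).symm ![x, y] : EuclideanSpace ℝ (Fin 2)), v⟫ =
        x * v 0 + y * v 1 := by
    intro x y v
    simp [PiLp.inner_apply, Fin.sum_univ_two, RCLike.inner_apply, WithLp.equiv_symm_apply, PiLp.toLp_apply]
    ring
  constructor
  · apply aux_tendsto γ hlip ((WithLp.equiv 2 (Fin 2 → ℝ)).symm ![ap, cp]) (hnorm _ _ hp1)
      M (ap * bp + cp * dp) _ a ha
    intro s hsM
    rw [hinner, (hγp s hsM).1, (hγp s hsM).2]
    nlinarith [hp1]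
  · -- reduce to the atTop case for γ ∘ Neg.neg
    have h2 : Tendsto (fun s : ℝ => ⨅ t : Set.Icc (0 : ℝ) a,
        ‖(γ ∘ Neg.neg) s - (γ ∘ Neg.neg) (t : ℝ)‖ / |s - (t : ℝ)|) atTop (𝓝 1) := by
      apply aux_tendsto (γ ∘ Neg.neg)
        (by
          have hneg : LipschitzWith 1 (Neg.neg : ℝ → ℝ) :=
            LipschitzWith.of_dist_le_mul (fun x y => by rw [dist_neg_neg]; simp)
          simpa using hlip.comp hneg)
        ((WithLp.equiv 2 (Fin 2 → ℝ)).symm ![-am, -cm])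
        (by simpa using hnorm (-am) (-cm) (by nlinarith [hm1]))
        M (-(am * bm + cm * dm)) _ a ha
      intro s hsM
      have h := hγm (-s) (by linarith)
      rw [hinner]
      simp only [Function.comp_apply]
      rw [h.1, h.2]
      nlinarith [hm1]
    have h3 := h2.comp tendsto_neg_atBot_atTop
    refine h3.congr fun s => ?_
    -- reindex the infimum
    have hsurj : Function.Surjective (fun t : Set.Icc (0:ℝ) a =>
        (⟨-(t : ℝ), by constructor <;> [linarith [t.2.2]; linarith [t.2.1]]⟩ :
          Set.Icc (-a) (0:ℝ))) := by
      rintro ⟨t, ht1, ht2⟩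
      exact ⟨⟨-t, by constructor <;> linarith⟩, by simp⟩
    show (⨅ t : Set.Icc (0:ℝ) a,
        ‖(γ ∘ Neg.neg) (-s) - (γ ∘ Neg.neg) (t : ℝ)‖ / |(-s) - (t : ℝ)|) = _
    have key : ∀ t' : Set.Icc (0:ℝ) a,
        ‖(γ ∘ Neg.neg) (-s) - (γ ∘ Neg.neg) (t' : ℝ)‖ / |(-s) - (t' : ℝ)| =
          ‖γ s - γ (-(t' : ℝ))‖ / |s - (-(t' : ℝ))| := by
      intro t'
      simp only [Function.comp_apply, neg_neg]
      congr 1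
      rw [← abs_neg]
      ring_nf
    rw [iInf_congr key]
    rw [← sInf_range, ← sInf_range,
      show (Set.range fun t' : Set.Icc (0:ℝ) a => ‖γ s - γ (-(t' : ℝ))‖ / |s - (-(t' : ℝ))|) =
        Set.range ((fun t : Set.Icc (-a) (0:ℝ) => ‖γ s - γ (t : ℝ)‖ / |s - (t : ℝ)|) ∘
          (fun t : Set.Icc (0:ℝ) a =>
            (⟨-(t : ℝ), by constructor <;> [linarith [t.2.2]; linarith [t.2.1]]⟩ :
              Set.Icc (-a) (0:ℝ)))) from rfl,
      hsurj.range_comp]
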